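/- Let (A,·,∘) be a transposed Novikov-Poisson algebra with A∘A = A. Then every ideal I of the Novikov algebra (A,∘) satisfies (A·I)∘A ⊆ I and A∘(A·I) ⊆ I, and moreover A·I ⊆ I; hence every ideal of (A,∘) is an ideal of (A,·,∘). Consequently, if (A,·,∘) is a non-trivial simple transposed Novikov-Poisson algebra, then the Novikov algebra (A,∘) is simple. -/
import Mathlib


/-- In a transposed Novikov-Poisson algebra with A∘A = A, every
ideal I of (A,∘) satisfies (A·I)∘A ⊆ I, A∘(A·I) ⊆ I and A·I ⊆ I (so it is an
ideal of (A,·,∘)); consequently if (A,·,∘) is non-trivial simple then (A,∘) is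
a simple Novikov algebra. -/
theorem stmt19 {k A : Type*} [Field k] [AddCommGroup A] [Module k A]
    (hchar : (2:k) ≠ 0)
    (mul cir : A →ₗ[k] A →ₗ[k] A)
    (hcomm : ∀ x y : A, mul x y = mul y x)
    (hassoc : ∀ x y z : A, mul (mul x y) z = mul x (mul y z))
    (hnov1 : ∀ x y z : A, cir (cir x y) z = cir (cir x z) y)
    (hnov2 : ∀ x y z : A, cir (cir x y) z - cir x (cir y z) = cir (cir y x) z - cir y (cir x z))
    (htnp1 : ∀ x y z : A, cir (mul x y) z = cir (mul x z) y)
    (htnp2 : ∀ x y z : A, (2:k) • mul z (cir x y) = cir (mul z x) y + cir x (mul z y))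
    (hAA : Submodule.span k {z : A | ∃ x y : A, cir x y = z} = ⊤) :
    (∀ I : Submodule k A,
      (∀ a ∈ I, ∀ w : A, cir w a ∈ I ∧ cir a w ∈ I) →
      ((∀ a ∈ I, ∀ x z : A, cir (mul x a) z ∈ I) ∧
       (∀ a ∈ I, ∀ x z : A, cir z (mul x a) ∈ I) ∧
       (∀ a ∈ I, ∀ x : A, mul x a ∈ I))) ∧
    ((∃ x y : A, mul x y ≠ 0) → (∃ x y : A, cir x y ≠ 0) →
      (∀ I : Submodule k A,
        (∀ a ∈ I, ∀ w : A, mul w a ∈ I) →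
        (∀ a ∈ I, ∀ w : A, cir w a ∈ I ∧ cir a w ∈ I) →
        I = ⊥ ∨ I = ⊤) →
      ((∃ x y : A, cir x y ≠ 0) ∧
       ∀ I : Submodule k A,
         (∀ a ∈ I, ∀ w : A, cir w a ∈ I ∧ cir a w ∈ I) →
         I = ⊥ ∨ I = ⊤)) := by
  -- Identity obtained by applying `cir · w` to htnp2:
  have expand : ∀ x y z w : A, (2:k) • cir (mul z (cir x y)) w
      = cir (cir (mul z x) y) w + cir (cir x (mul z y)) w := by
    intro x y z w
    have h := congrArg (fun u => cir u w) (htnp2 x y z)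
    simpa [map_smul, map_add, LinearMap.smul_apply, LinearMap.add_apply] using h
  -- Identity (**): from htnp2 applied at (x∘y)∘w = (x∘w)∘y.
  have E : ∀ x y z w : A,
      cir (mul z (cir x y)) w + cir (cir x y) (mul z w)
        = cir (mul z (cir x w)) y + cir (cir x w) (mul z y) := by
    intro x y z w
    have h1 := htnp2 (cir x y) w z
    have h2 := htnp2 (cir x w) y z
    rw [hnov1 x y w] at h1
    exact h1.symm.trans h2
  -- Identity (♦)
  have D : ∀ x y z w : A,
      cir (cir x (mul z y)) w + (2:k) • cir (cir x y) (mul z w)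
        = cir (cir x (mul z w)) y + (2:k) • cir (cir x w) (mul z y) := by
    intro x y z w
    have e := congrArg (fun v : A => (2:k) • v) (E x y z w)
    simp only [smul_add] at e
    rw [expand x y z w, expand x w z y, hnov1 (mul z x) y w] at e
    rw [add_assoc, add_assoc] at e
    exact add_left_cancel e
  have main : ∀ I : Submodule k A,
      (∀ a ∈ I, ∀ w : A, cir w a ∈ I ∧ cir a w ∈ I) →
      ((∀ a ∈ I, ∀ x z : A, cir (mul x a) z ∈ I) ∧
       (∀ a ∈ I, ∀ x z : A, cir z (mul x a) ∈ I) ∧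
       (∀ a ∈ I, ∀ x : A, mul x a ∈ I)) := by
    intro I hI
    have hL : ∀ a ∈ I, ∀ w : A, cir w a ∈ I := fun a ha w => (hI a ha w).1
    have hR : ∀ a ∈ I, ∀ w : A, cir a w ∈ I := fun a ha w => (hI a ha w).2
    have half : ∀ v : A, (2:k) • v ∈ I → v ∈ I := by
      intro v hv
      have := I.smul_mem ((2:k)⁻¹) hv
      rwa [inv_smul_smul₀ hchar] at this
    have step1 : ∀ a ∈ I, ∀ x z : A, cir (mul x a) z ∈ I := by
      intro a ha x z
      rw [htnp1]
      exact hL a ha _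
    -- key: (x∘w)∘(z·a) ∈ I
    have key : ∀ a ∈ I, ∀ x w z : A, cir (cir x w) (mul z a) ∈ I := by
      intro a ha x w z
      apply half
      have d := D x a z w
      have h1 : cir (cir x (mul z a)) w ∈ I := by
        have h := htnp2 x a z
        have hx : cir x (mul z a) = (2:k) • mul z (cir x a) - cir (mul z x) a := by
          exact eq_sub_of_add_eq' h.symm
        have hx2 : cir (cir x (mul z a)) w
            = (2:k) • cir (mul z (cir x a)) w - cir (cir (mul z x) a) w := by
          rw [hx]
          simp [map_sub, map_smul, LinearMap.sub_apply, LinearMap.smul_apply]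
        rw [hx2]
        exact sub_mem (I.smul_mem _ (step1 (cir x a) (hL a ha x) z w))
          (hR _ (hL a ha (mul z x)) w)
      have h2 : cir (cir x a) (mul z w) ∈ I := hR _ (hL a ha x) _
      have h3 : cir (cir x (mul z w)) a ∈ I := hL a ha _
      have hEq : (2:k) • cir (cir x w) (mul z a)
          = cir (cir x (mul z a)) w + (2:k) • cir (cir x a) (mul z w)
            - cir (cir x (mul z w)) a := eq_sub_of_add_eq' d.symm
      rw [hEq]
      exact sub_mem (add_mem h1 (I.smul_mem _ h2)) h3
    have step2 : ∀ a ∈ I, ∀ x z : A, cir z (mul x a) ∈ I := by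
      intro a ha x z
      have hz : z ∈ Submodule.span k {w : A | ∃ p q : A, cir p q = w} := by
        rw [hAA]; trivial
      refine Submodule.span_induction ?_ ?_ ?_ ?_ hz
        (p := fun u _ => cir u (mul x a) ∈ I)
      · rintro _ ⟨p, q, rfl⟩
        exact key a ha p q x
      · simp only [map_zero, LinearMap.zero_apply]
        exact I.zero_mem
      · intro u v _ _ hu hv
        simp only [map_add, LinearMap.add_apply]
        exact add_mem hu hv
      · intro r u _ hu
        simp only [map_smul, LinearMap.smul_apply]
        exact I.smul_mem r hu
    have step3 : ∀ a ∈ I, ∀ x : A, mul x a ∈ I := by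
      intro a ha x
      have hz : x ∈ Submodule.span k {w : A | ∃ p q : A, cir p q = w} := by
        rw [hAA]; trivial
      refine Submodule.span_induction ?_ ?_ ?_ ?_ hz
        (p := fun u _ => mul u a ∈ I)
      · rintro _ ⟨p, q, rfl⟩
        apply half
        rw [hcomm (cir p q) a, htnp2 p q a]
        exact add_mem (by rw [hcomm a p]; exact step1 a ha p q)
          (by rw [hcomm a q]; exact step2 a ha q p)
      · simp only [map_zero, LinearMap.zero_apply]
        exact I.zero_mem
      · intro u v _ _ hu hv
        simp only [map_add, LinearMap.add_apply]
        exact add_mem hu hv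
      · intro r u _ hu
        simp only [map_smul, LinearMap.smul_apply]
        exact I.smul_mem r hu
    exact ⟨step1, step2, step3⟩
  refine ⟨main, ?_⟩
  intro _ hcir hsimp
  refine ⟨hcir, fun I hIc => ?_⟩
  exact hsimp I (fun a ha w => (main I hIc).2.2 a ha w) hIc
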